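/- Let Λ = (W_j, Λ_j, v_j) be a g-fusion frame for H with bounds A, B, let Θ_j : H → H_j be bounded linear operators, and let 0 < R < A be such that Σ_{j∈J} v_j² ‖π_{W_j}Λ_j*Λ_jπ_{W_j} f − π_{W_j}Θ_j*Θ_jπ_{W_j} f‖ ≤ R‖f‖ for all f ∈ H. Then Θ = (W_j, Θ_j, v_j) is a g-fusion frame for H with lower bound A − R and upper bound B + R√(B/A). -/

import Mathlib

open scoped InnerProductSpace
open ContinuousLinearMap

/-- The orthogonal projection of `H` onto the closed subspace `W j`, as a map `H →L[ℂ] H`. -/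
noncomputable def gfProj {H : Type*} [NormedAddCommGroup H] [InnerProductSpace ℂ H]
    {J : Type*} (W : J → Submodule ℂ H) [∀ j, CompleteSpace (W j)] (j : J) : H →L[ℂ] H :=
  (W j).subtypeL.comp ((W j).orthogonalProjectionOnto)

lemma gfProj_inner_key {H : Type*} [NormedAddCommGroup H] [InnerProductSpace ℂ H]
    [CompleteSpace H] {J : Type*} {Hs : J → Type*} [∀ j, NormedAddCommGroup (Hs j)]
    [∀ j, InnerProductSpace ℂ (Hs j)] [∀ j, CompleteSpace (Hs j)]
    (W : J → Submodule ℂ H) [∀ j, CompleteSpace (W j)]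
    (Λ : ∀ j, H →L[ℂ] Hs j) (j : J) (f : H) :
    RCLike.re (⟪gfProj W j (adjoint (Λ j) (Λ j (gfProj W j f))), f⟫_ℂ)
      = ‖Λ j (gfProj W j f)‖ ^ 2 := by
  have h1 : (⟪gfProj W j (adjoint (Λ j) (Λ j (gfProj W j f))), f⟫_ℂ)
      = ⟪Λ j (gfProj W j f), Λ j (gfProj W j f)⟫_ℂ := by
    show (⟪((W j).subtypeL.comp ((W j).orthogonalProjectionOnto))
        (adjoint (Λ j) (Λ j (gfProj W j f))), f⟫_ℂ) = _
    simp only [ContinuousLinearMap.comp_apply, Submodule.subtypeL_apply]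
    rw [← Submodule.starProjection_apply, Submodule.inner_starProjection_left_eq_right,
      Submodule.starProjection_apply, ContinuousLinearMap.adjoint_inner_left]
    rfl
  rw [h1, ← norm_sq_eq_re_inner (𝕜 := ℂ)]

/-- perturbation: if `Λ` is a g-fusion frame with bounds `A, B`, `0 < R < A`,
and `Σ_j v_j² ‖π_{W_j}Λ_j*Λ_jπ_{W_j} f − π_{W_j}Θ_j*Θ_jπ_{W_j} f‖ ≤ R‖f‖` for all `f`, then
`Θ = (W_j, Θ_j, v_j)` is a g-fusion frame with bounds `A − R` and `B + R√(B/A)`. -/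
theorem gfusion_frame_perturbation_R
    {H : Type*} [NormedAddCommGroup H] [InnerProductSpace ℂ H] [CompleteSpace H]
    {J : Type*} [Countable J]
    {Hs : J → Type*} [∀ j, NormedAddCommGroup (Hs j)] [∀ j, InnerProductSpace ℂ (Hs j)]
    [∀ j, CompleteSpace (Hs j)]
    (W : J → Submodule ℂ H) [∀ j, CompleteSpace (W j)]
    (v : J → ℝ) (hv : ∀ j, 0 < v j)
    (Λ : ∀ j, H →L[ℂ] Hs j) (Θ : ∀ j, H →L[ℂ] Hs j)
    (A B : ℝ) (hA : 0 < A) (hAB : A ≤ B)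
    (hframe : ∀ f : H,
        Summable (fun j => (v j) ^ 2 * ‖Λ j (gfProj W j f)‖ ^ 2) ∧
        A * ‖f‖ ^ 2 ≤ ∑' j, (v j) ^ 2 * ‖Λ j (gfProj W j f)‖ ^ 2 ∧
        ∑' j, (v j) ^ 2 * ‖Λ j (gfProj W j f)‖ ^ 2 ≤ B * ‖f‖ ^ 2)
    (R : ℝ) (hR : 0 < R) (hRA : R < A)
    (hpert : ∀ f : H,
        Summable (fun j => (v j) ^ 2 *
          ‖gfProj W j (adjoint (Λ j) (Λ j (gfProj W j f))) -
           gfProj W j (adjoint (Θ j) (Θ j (gfProj W j f)))‖) ∧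
        ∑' j, (v j) ^ 2 *
          ‖gfProj W j (adjoint (Λ j) (Λ j (gfProj W j f))) -
           gfProj W j (adjoint (Θ j) (Θ j (gfProj W j f)))‖ ≤ R * ‖f‖) :
    ∀ f : H,
      Summable (fun j => (v j) ^ 2 * ‖Θ j (gfProj W j f)‖ ^ 2) ∧
      (A - R) * ‖f‖ ^ 2 ≤ ∑' j, (v j) ^ 2 * ‖Θ j (gfProj W j f)‖ ^ 2 ∧
      ∑' j, (v j) ^ 2 * ‖Θ j (gfProj W j f)‖ ^ 2 ≤
        (B + R * Real.sqrt (B / A)) * ‖f‖ ^ 2 := by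
  intro f
  obtain ⟨hS, hlow, hup⟩ := hframe f
  obtain ⟨hpS, hpB⟩ := hpert f
  set D : J → H := fun j =>
    gfProj W j (adjoint (Λ j) (Λ j (gfProj W j f))) -
      gfProj W j (adjoint (Θ j) (Θ j (gfProj W j f))) with hD
  set c : J → ℝ := fun j => (v j) ^ 2 * RCLike.re (⟪D j, f⟫_ℂ) with hc
  -- key pointwise identity
  have hkey : ∀ j, (v j) ^ 2 * ‖Θ j (gfProj W j f)‖ ^ 2
      = (v j) ^ 2 * ‖Λ j (gfProj W j f)‖ ^ 2 - c j := by
    intro j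
    have : RCLike.re (⟪D j, f⟫_ℂ)
        = ‖Λ j (gfProj W j f)‖ ^ 2 - ‖Θ j (gfProj W j f)‖ ^ 2 := by
      rw [hD]
      simp only [inner_sub_left, map_sub, gfProj_inner_key W Λ j f,
        gfProj_inner_key W Θ j f]
    simp only [hc, this]
    ring
  -- bound on c
  have hbd : ∀ j, ‖c j‖ ≤ (v j) ^ 2 * ‖D j‖ * ‖f‖ := by
    intro j
    have h1 : |RCLike.re (⟪D j, f⟫_ℂ)| ≤ ‖D j‖ * ‖f‖ :=
      (RCLike.abs_re_le_norm _).trans (norm_inner_le_norm _ _)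
    have hv2 : (0:ℝ) ≤ (v j) ^ 2 := sq_nonneg _
    calc ‖c j‖ = (v j) ^ 2 * |RCLike.re (⟪D j, f⟫_ℂ)| := by
          rw [hc]; simp [abs_mul, abs_of_nonneg hv2]
      _ ≤ (v j) ^ 2 * (‖D j‖ * ‖f‖) := by
          exact mul_le_mul_of_nonneg_left h1 hv2
      _ = (v j) ^ 2 * ‖D j‖ * ‖f‖ := by ring
  have hgS : Summable (fun j => (v j) ^ 2 * ‖D j‖ * ‖f‖) := by
    simpa [mul_assoc] using hpS.mul_right ‖f‖
  have hcS : Summable c := Summable.of_norm_bounded hgS hbd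
  have hbS : Summable (fun j => (v j) ^ 2 * ‖Θ j (gfProj W j f)‖ ^ 2) := by
    have := hS.sub hcS
    simpa [hkey] using this
  refine ⟨hbS, ?_, ?_⟩ <;>
  · have htsum : ∑' j, (v j) ^ 2 * ‖Θ j (gfProj W j f)‖ ^ 2
        = (∑' j, (v j) ^ 2 * ‖Λ j (gfProj W j f)‖ ^ 2) - ∑' j, c j := by
      rw [← Summable.tsum_sub hS hcS]
      exact tsum_congr hkey
    have hcbound : |∑' j, c j| ≤ R * ‖f‖ ^ 2 := by
      have h1 : |∑' j, c j| ≤ ∑' j, ‖c j‖ := by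
        simpa using norm_tsum_le_tsum_norm (hcS.norm)
      have h2 : ∑' j, ‖c j‖ ≤ ∑' j, (v j) ^ 2 * ‖D j‖ * ‖f‖ :=
        Summable.tsum_le_tsum hbd hcS.norm hgS
      have h3 : ∑' j, (v j) ^ 2 * ‖D j‖ * ‖f‖
          = (∑' j, (v j) ^ 2 * ‖D j‖) * ‖f‖ := by
        exact tsum_mul_right
      have h4 : (∑' j, (v j) ^ 2 * ‖D j‖) * ‖f‖ ≤ (R * ‖f‖) * ‖f‖ :=
        mul_le_mul_of_nonneg_right hpB (norm_nonneg f)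
      nlinarith [norm_nonneg f]
    have hsqrt : (1:ℝ) ≤ Real.sqrt (B / A) := by
      rw [Real.one_le_sqrt]
      rw [le_div_iff₀ hA]; linarith
    rw [htsum]
    nlinarith [sq_nonneg ‖f‖, abs_le.mp hcbound]
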